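/- Let a_k be the pBWT permutation at column k (sorting reversed prefixes R'_{i,k} lexicographically, ties broken so the sort is stable with respect to a_{k-1}). If i ∈ [1,m], i' is the position with a_k[i'] = a_{k-1}[i], and j is the maximum index j < i with R_{a_{k-1}[j]}[k] = R_{a_{k-1}[i]}[k] (assumed to exist), then a_k[i'-1] = a_{k-1}[j] and LCP(R'_{a_k[i'-1],k}, R'_{a_k[i'],k}) = 1 + min{ LCP(R'_{a_{k-1}[ℓ-1],k-1}, R'_{a_{k-1}[ℓ],k-1}) : j < ℓ ≤ i }. If no such j exists, then LCP(R'_{a_k[i'-1],k}, R'_{a_k[i'],k}) = 0. -/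

import Mathlib

/-- The reversed prefix `R_i[k] R_i[k-1] ⋯ R_i[1]` as a list. -/
def revPrefix {α : Type*} {m : ℕ} (R : Fin m → ℕ → α) (i : Fin m) (k : ℕ) : List α :=
  (List.range k).map (fun x => R i (k - x))

/-- `a` sorts the reversed prefixes at column `k` lexicographically. -/
def SortsRevPrefixes {α : Type*} [LinearOrder α] {m : ℕ} (R : Fin m → ℕ → α)
    (a : Equiv.Perm (Fin m)) (k : ℕ) : Prop :=
  ∀ i j : Fin m, i ≤ j → revPrefix R (a i) k ≤ revPrefix R (a j) k

/-- The length of the longest common prefix of two lists. -/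
def lcp {α : Type*} [DecidableEq α] : List α → List α → ℕ
  | a :: s, b :: t => if a = b then lcp s t + 1 else 0
  | _, _ => 0

section lcpaux
variable {α : Type*} [LinearOrder α]

lemma mylcp.nil_left (t : List α) : lcp [] t = 0 := by cases t <;> rfl
lemma mylcp.nil_right (s : List α) : lcp s [] = 0 := by cases s <;> rfl
lemma mylcp.cons (a b : α) (s t : List α) :
    lcp (a :: s) (b :: t) = if a = b then lcp s t + 1 else 0 := rfl

lemma myLex.not_cons_le_nil' (a : α) (s : List α) : ¬ (a :: s ≤ ([] : List α)) := by
  intro h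
  rcases lt_or_eq_of_le h with h | h
  · cases (Iff.rfl : a::s < [] ↔ List.Lex (·<·) _ _).mp h
  · simp at h

lemma myLex.head_le' {a b : α} {s t : List α} (h : a :: s ≤ b :: t) : a ≤ b := by
  rcases lt_or_eq_of_le h with h | h
  · cases (Iff.rfl : a::s < b::t ↔ List.Lex (·<·) _ _).mp h with
    | rel h => exact le_of_lt h
    | cons h => exact le_rfl
  · injection h with h1 h2; exact le_of_eq h1

lemma myLex.cons_le_cons_iff' {a : α} {s t : List α} : a :: s ≤ a :: t ↔ s ≤ t := by
  constructor
  · intro h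
    rcases lt_or_eq_of_le h with h | h
    · exact le_of_lt (List.lex_cons_iff.mp h)
    · injection h with h1 h2; exact le_of_eq h2
  · intro h
    rcases lt_or_eq_of_le h with h | h
    · exact le_of_lt (List.lex_cons_iff.mpr h)
    · exact le_of_eq (by rw [h])

lemma mylcp.min_le : ∀ (s t u : List α), min (lcp s t) (lcp t u) ≤ lcp s u
  | [], t, u => by simp [mylcp.nil_left]
  | _ :: _, [], _ => by simp [mylcp.nil_right, mylcp.nil_left]
  | _ :: _, _ :: _, [] => by simp [mylcp.nil_right]
  | a :: s, b :: t, c :: u => by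
    by_cases hab : a = b
    · by_cases hbc : b = c
      · subst hab; subst hbc
        have := mylcp.min_le s t u
        simp only [mylcp.cons, eq_self_iff_true, if_true]
        omega
      · simp [mylcp.cons, hbc]
    · simp [mylcp.cons, hab]

lemma mylcp.le_of_between : ∀ (s t u : List α), s ≤ t → t ≤ u →
    lcp s u ≤ min (lcp s t) (lcp t u)
  | [], _, _, _, _ => by simp [mylcp.nil_left]
  | _ :: _, _, [], _, _ => by simp [mylcp.nil_right]
  | _ :: _, [], _ :: _, hst, _ => absurd hst (myLex.not_cons_le_nil' _ _)
  | a :: s, b :: t, c :: u, hst, htu => by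
    by_cases hac : a = c
    · have hab : a = b :=
        le_antisymm (myLex.head_le' hst) (hac ▸ myLex.head_le' htu)
      subst hab; subst hac
      have := mylcp.le_of_between s t u (myLex.cons_le_cons_iff'.mp hst)
        (myLex.cons_le_cons_iff'.mp htu)
      simp only [mylcp.cons, eq_self_iff_true, if_true]
      omega
    · simp [mylcp.cons, hac]

lemma mylcp.sorted_min (s t u : List α) (hst : s ≤ t) (htu : t ≤ u) :
    lcp s u = min (lcp s t) (lcp t u) :=
  le_antisymm (mylcp.le_of_between s t u hst htu) (mylcp.min_le s t u)

lemma mylcp.tele (f : ℕ → List α) (hf : Monotone f) (j : ℕ) :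
    ∀ i, j < i → (lcp (f j) (f i) : ℕ∞) =
      (Finset.Ioc j i).inf (fun l => (lcp (f (l - 1)) (f l) : ℕ∞)) := by
  intro i
  induction i with
  | zero => omega
  | succ i ih =>
    intro hji
    rcases Nat.lt_or_ge j i with h | h
    · rw [← Finset.Ioc_union_Ioc_eq_Ioc (le_of_lt h) (Nat.le_succ i), Finset.inf_union,
        Nat.Ioc_succ_singleton, Finset.inf_singleton, ← ih h]
      simp only [Nat.add_sub_cancel]
      rw [mylcp.sorted_min (f j) (f i) (f (i + 1)) (hf h.le) (hf (Nat.le_succ i))]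
      rcases le_total (lcp (f j) (f i)) (lcp (f i) (f (i + 1))) with hle | hle
      · rw [inf_eq_left.mpr hle, inf_eq_left.mpr (by exact_mod_cast hle)]
      · rw [inf_eq_right.mpr hle, inf_eq_right.mpr (by exact_mod_cast hle)]
    · have hji' : j = i := le_antisymm (Nat.lt_succ_iff.mp hji) h
      subst hji'
      rw [Nat.Ioc_succ_singleton, Finset.inf_singleton]
      simp

lemma myrevPrefix.succ {m : ℕ} (R : Fin m → ℕ → α) (x : Fin m) (k : ℕ) :
    revPrefix R x (k + 1) = R x (k + 1) :: revPrefix R x k := by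
  unfold revPrefix
  rw [List.range_succ_eq_map]
  simp [List.map_map, Function.comp_def, Nat.succ_sub_succ]

lemma myrevPrefix.eq {m : ℕ} (R : Fin m → ℕ → α) (x : Fin m) {k : ℕ} (hk : 1 ≤ k) :
    revPrefix R x k = R x k :: revPrefix R x (k - 1) := by
  obtain ⟨k', rfl⟩ := Nat.exists_eq_add_of_le hk
  rw [Nat.add_comm 1 k']
  simpa using myrevPrefix.succ R x k'

end lcpaux

theorem stmt13 {α : Type*} [LinearOrder α] (m n : ℕ) (R : Fin m → ℕ → α)
    (k : ℕ) (hk : 1 ≤ k) (hkn : k ≤ n)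
    (a' a : Equiv.Perm (Fin m))
    (ha' : SortsRevPrefixes R a' (k - 1)) (ha : SortsRevPrefixes R a k)
    (hstable : ∀ i₁ i₂ : Fin m, i₁ < i₂ → R (a' i₁) k = R (a' i₂) k →
      a.symm (a' i₁) < a.symm (a' i₂))
    (i : Fin m) (i' : Fin m) (hi' : i' = a.symm (a' i)) :
    -- if a previous occurrence of the letter R_{a_{k-1}[i]}[k] exists
    (∀ j : Fin m, j < i → R (a' j) k = R (a' i) k →
      (∀ l : Fin m, j < l → l < i → R (a' l) k ≠ R (a' i) k) →
      a ⟨(i' : ℕ) - 1, lt_of_le_of_lt (Nat.sub_le _ _) i'.isLt⟩ = a' j ∧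
      (lcp (revPrefix R (a ⟨(i' : ℕ) - 1, lt_of_le_of_lt (Nat.sub_le _ _) i'.isLt⟩) k)
          (revPrefix R (a i') k) : ℕ∞) =
        1 + (Finset.univ.filter (fun l : Fin m => (j : ℕ) < (l : ℕ) ∧ l ≤ i)).inf
          (fun l =>
            (lcp (revPrefix R (a' ⟨(l : ℕ) - 1, lt_of_le_of_lt (Nat.sub_le _ _) l.isLt⟩) (k - 1))
              (revPrefix R (a' l) (k - 1)) : ℕ∞))) ∧
    -- if no such previous occurrence exists
    ((∀ j : Fin m, j < i → R (a' j) k ≠ R (a' i) k) → 0 < (i' : ℕ) →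
      lcp (revPrefix R (a ⟨(i' : ℕ) - 1, lt_of_le_of_lt (Nat.sub_le _ _) i'.isLt⟩) k)
        (revPrefix R (a i') k) = 0) := by
  have hm : 0 < m := i.pos
  have hai' : a i' = a' i := by rw [hi', Equiv.apply_symm_apply]
  -- heads of the sorted column are monotone
  have hhead : ∀ p q : Fin m, p ≤ q → R (a p) k ≤ R (a q) k := by
    intro p q hpq
    have := ha p q hpq
    rw [myrevPrefix.eq R (a p) hk, myrevPrefix.eq R (a q) hk] at this
    exact myLex.head_le' this
  constructor
  · intro j hji hcj hbetween
    set p1 : Fin m := ⟨(i' : ℕ) - 1, lt_of_le_of_lt (Nat.sub_le _ _) i'.isLt⟩ with hp1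
    set p0 : Fin m := a.symm (a' j) with hp0
    have h0 : p0 < i' := by
      rw [hp0, hi']
      exact hstable j i hji hcj
    have hpos : 0 < (i' : ℕ) := by
      have := Fin.lt_def.mp h0
      omega
    have hp1lt : p1 < i' := by
      rw [Fin.lt_def]
      exact Nat.sub_lt hpos one_pos
    have hp0le : p0 ≤ p1 := by
      rw [Fin.le_def]
      have := Fin.lt_def.mp h0
      show (p0 : ℕ) ≤ (i' : ℕ) - 1
      omega
    -- the head at position p1 equals the common letter
    have hchar0 : R (a p0) k = R (a' i) k := by
      rw [hp0, Equiv.apply_symm_apply]; exact hcj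
    have hchari : R (a i') k = R (a' i) k := by rw [hai']
    have hchar1 : R (a p1) k = R (a' i) k := by
      refine le_antisymm ?_ ?_
      · rw [← hchari]; exact hhead p1 i' hp1lt.le
      · rw [← hchar0]; exact hhead p0 p1 hp0le
    -- identify a p1 with a' j
    have hkey : a p1 = a' j := by
      set l0 : Fin m := a'.symm (a p1) with hl0
      have hal0 : a' l0 = a p1 := by rw [hl0, Equiv.apply_symm_apply]
      have hcl0 : R (a' l0) k = R (a' i) k := by rw [hal0]; exact hchar1
      have hl0j : l0 = j := by
        rcases lt_trichotomy l0 j with h | h | h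
        · exfalso
          have := hstable l0 j h (by rw [hcl0, hcj])
          rw [hal0, Equiv.symm_apply_apply, ← hp0] at this
          exact absurd this (not_lt.mpr hp0le)
        · exact h
        · exfalso
          rcases lt_trichotomy l0 i with h2 | h2 | h2
          · exact hbetween l0 h h2 hcl0
          · subst h2
            have : a p1 = a i' := by rw [← hal0, ← hai']
            have hp1i : p1 = i' := a.injective this
            exact absurd (hp1i ▸ hp1lt) (lt_irrefl _)
          · have := hstable i l0 h2 (by rw [hcl0])
            rw [← hi', hal0, Equiv.symm_apply_apply] at this
            exact absurd (this.trans hp1lt) (lt_irrefl _)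
      rw [← hal0, hl0j]
    refine ⟨hkey, ?_⟩
    -- now compute the lcp
    rw [myrevPrefix.eq R _ hk, myrevPrefix.eq R _ hk, mylcp.cons,
      if_pos (by rw [hchar1, hchari])]
    rw [hkey, hai']
    -- set up the monotone sequence on ℕ
    set cl : ℕ → Fin m := fun p =>
      if h : p < m then ⟨p, h⟩ else ⟨m - 1, Nat.sub_lt hm one_pos⟩ with hcldef
    have hcl : ∀ (p : ℕ) (h : p < m), cl p = ⟨p, h⟩ := fun p h => dif_pos h
    have hclle : ∀ p q : ℕ, p ≤ q → cl p ≤ cl q := by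
      intro p q hpq
      rw [Fin.le_def]
      simp only [hcldef]
      split <;> split <;> simp <;> omega
    set f : ℕ → List α := fun p => revPrefix R (a' (cl p)) (k - 1) with hf
    have hfmono : Monotone f := fun p q hpq => ha' _ _ (hclle p q hpq)
    have hfj : f (j : ℕ) = revPrefix R (a' j) (k - 1) := by
      simp only [hf]; rw [hcl _ j.isLt]
    have hfi : f (i : ℕ) = revPrefix R (a' i) (k - 1) := by
      simp only [hf]; rw [hcl _ i.isLt]
    have hji' : (j : ℕ) < (i : ℕ) := hji
    have htele := mylcp.tele f hfmono (j : ℕ) (i : ℕ) hji'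
    rw [hfj, hfi] at htele
    -- identify the filter with an Ioc and transfer
    have hfilter : (Finset.univ.filter (fun l : Fin m => (j : ℕ) < (l : ℕ) ∧ l ≤ i))
        = Finset.Ioc j i := by
      ext l
      simp only [Finset.mem_filter, Finset.mem_univ, true_and, Finset.mem_Ioc]
      exact and_congr_left' Fin.lt_def.symm
    have hinf : (Finset.Ioc j i).inf
        (fun l : Fin m =>
          (lcp (revPrefix R (a' ⟨(l : ℕ) - 1, lt_of_le_of_lt (Nat.sub_le _ _) l.isLt⟩) (k - 1))
            (revPrefix R (a' l) (k - 1)) : ℕ∞))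
        = (Finset.Ioc (j : ℕ) (i : ℕ)).inf (fun l => (lcp (f (l - 1)) (f l) : ℕ∞)) := by
      rw [← Fin.map_valEmbedding_Ioc, Finset.inf_map]
      apply Finset.inf_congr rfl
      intro l hl
      simp only [Finset.mem_Ioc] at hl
      have hl1 : 1 ≤ (l : ℕ) := by
        have := hl.1; omega
      simp only [Function.comp_apply, Fin.valEmbedding_apply, hf]
      rw [hcl ((l : ℕ) - 1) (by have := l.isLt; omega), hcl (l : ℕ) l.isLt]
    rw [hfilter, hinf, ← htele]
    push_cast
    ring
  · intro hno hpos
    set p1 : Fin m := ⟨(i' : ℕ) - 1, lt_of_le_of_lt (Nat.sub_le _ _) i'.isLt⟩ with hp1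
    rw [myrevPrefix.eq R _ hk, myrevPrefix.eq R _ hk, mylcp.cons]
    rw [if_neg]
    intro heq
    set l0 : Fin m := a'.symm (a p1) with hl0
    have hal0 : a' l0 = a p1 := by rw [hl0, Equiv.apply_symm_apply]
    have hcl0 : R (a' l0) k = R (a' i) k := by rw [hal0, heq, hai']
    have hp1lt : p1 < i' := by
      rw [Fin.lt_def]
      exact Nat.sub_lt hpos one_pos
    rcases lt_trichotomy l0 i with h | h | h
    · exact hno l0 h hcl0
    · subst h
      have : a p1 = a i' := by rw [← hal0, ← hai']
      exact absurd ((a.injective this) ▸ hp1lt) (lt_irrefl _)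
    · have := hstable i l0 h (by rw [hcl0])
      rw [← hi', hal0, Equiv.symm_apply_apply] at this
      exact absurd (this.trans hp1lt) (lt_irrefl _)
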